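/- For every positive integer k and every x > 0, the double inequality (k−1)!/x^k + k!/(2x^{k+1}) < (−1)^{k+1} ψ^{(k)}(x) < (k−1)!/x^k + k!/x^{k+1} holds. -/

import Mathlib

lemma pow_upper (k : ℕ) (hk : 1 ≤ k) (a : ℝ) (ha : 0 < a) :
    a ^ k * (a + 1 + k) < (a + 1) ^ (k + 1) := by
  induction k, hk using Nat.le_induction with
  | base => push_cast; nlinarith
  | succ k hk ih =>
    have h1 : (0:ℝ) < a + 1 := by linarith
    have hp : (0:ℝ) < a ^ k := pow_pos ha k
    have e1 : a ^ (k+1) = a * a ^ k := by ring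
    have e2 : (a+1) ^ (k+1+1) = (a+1) * (a+1) ^ (k+1) := by ring
    push_cast
    rw [e1, e2]
    nlinarith [mul_lt_mul_of_pos_left ih h1, mul_pos hp (show (0:ℝ) < (k:ℝ)+1 by positivity)]

lemma pow_bern (k : ℕ) (a : ℝ) (ha : 0 < a) :
    a ^ (k+1) + (k+1) * a ^ k ≤ (a + 1) ^ (k + 1) := by
  induction k with
  | zero => push_cast; nlinarith
  | succ k ih =>
    have h1 : (0:ℝ) < a + 1 := by linarith
    have hp : (0:ℝ) < a ^ k := pow_pos ha k
    have e1 : a ^ (k+1+1) = a * a ^ (k+1) := by ring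
    have e1' : a ^ (k+1) = a * a ^ k := by ring
    have e2 : (a+1) ^ (k+1+1) = (a+1) * (a+1) ^ (k+1) := by ring
    push_cast
    rw [e2, e1]
    nlinarith [mul_le_mul_of_nonneg_left ih h1.le, mul_pos hp (show (0:ℝ) < (k:ℝ)+1 by positivity)]

lemma pow_lower (k : ℕ) (hk : 1 ≤ k) (a : ℝ) (ha : 0 < a) :
    2 * a * (a+1) * ((a+1)^k - a^k) < k * ((a+1)^(k+1) + a^(k+1)) := by
  induction k, hk using Nat.le_induction with
  | base => push_cast; nlinarith
  | succ k hk ih =>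
    have h1 : (0:ℝ) < a + 1 := by linarith
    have hp : (0:ℝ) < a ^ k := pow_pos ha k
    have hp1 : (0:ℝ) < a ^ (k+1) := pow_pos ha (k+1)
    have hb := pow_bern k a ha
    have e2 : (a+1) ^ (k+1+1) = (a+1) * (a+1) ^ (k+1) := by ring
    have e1 : a ^ (k+1+1) = a * a ^ (k+1) := by ring
    have e1' : a ^ (k+1) = a * a ^ k := by ring
    have e2' : (a+1) ^ (k+1) = (a+1) * (a+1) ^ k := by ring
    -- key : (a+1)^(k+2) ≥ a^(k+1)*(a+1) + (k+1)*a^(k+1)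
    have key : a^(k+1)*(a+1) + (k+1)*a^(k+1) ≤ (a+1) * (a+1)^(k+1) := by
      have := mul_le_mul_of_nonneg_left hb h1.le
      nlinarith [mul_pos hp (show (0:ℝ) < (k:ℝ)+1 by positivity),
        mul_pos (mul_pos hp1 h1) (show (0:ℝ) < (k:ℝ)+1 by positivity)]
    push_cast
    rw [e2, e1]
    nlinarith [mul_lt_mul_of_pos_left ih h1, key, mul_pos (mul_pos ha h1) hp]

lemma key_upper (k : ℕ) (hk : 1 ≤ k) (a : ℝ) (ha : 0 < a) :
    (k:ℝ) / (a+1)^(k+1) < 1/a^k - 1/(a+1)^k := by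
  have h1 : (0:ℝ) < a + 1 := by linarith
  have hp : (0:ℝ) < a ^ k := pow_pos ha k
  have hq : (0:ℝ) < (a+1) ^ k := pow_pos h1 k
  have hq1 : (0:ℝ) < (a+1) ^ (k+1) := pow_pos h1 (k+1)
  rw [show (1:ℝ)/a^k - 1/(a+1)^k = ((a+1)^k - a^k)/(a^k*(a+1)^k) by
      field_simp, div_lt_div_iff₀ hq1 (mul_pos hp hq)]
  have e2' : (a+1) ^ (k+1) = (a+1) * (a+1) ^ k := by ring
  nlinarith [mul_lt_mul_of_pos_right (pow_upper k hk a ha) hq]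

lemma key_lower (k : ℕ) (hk : 1 ≤ k) (a : ℝ) (ha : 0 < a) :
    1/a^k - 1/(a+1)^k < ((k:ℝ)/2) * (1/a^(k+1) + 1/(a+1)^(k+1)) := by
  have h1 : (0:ℝ) < a + 1 := by linarith
  have hp : (0:ℝ) < a ^ k := pow_pos ha k
  have hq : (0:ℝ) < (a+1) ^ k := pow_pos h1 k
  have hp1 : (0:ℝ) < a ^ (k+1) := pow_pos ha (k+1)
  have hq1 : (0:ℝ) < (a+1) ^ (k+1) := pow_pos h1 (k+1)
  rw [show (1:ℝ)/a^k - 1/(a+1)^k = ((a+1)^k - a^k)/(a^k*(a+1)^k) by field_simp,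
    show ((k:ℝ)/2) * (1/a^(k+1) + 1/(a+1)^(k+1))
        = ((k:ℝ)/2 * ((a+1)^(k+1) + a^(k+1))) / (a^(k+1)*(a+1)^(k+1)) by field_simp,
    div_lt_div_iff₀ (mul_pos hp hq) (mul_pos hp1 hq1)]
  have e1 : a ^ (k+1) = a * a ^ k := by ring
  have e2 : (a+1) ^ (k+1) = (a+1) * (a+1) ^ k := by ring
  have h := mul_lt_mul_of_pos_right (pow_lower k hk a ha) (mul_pos hp hq)
  ring_nf at h ⊢
  linarith [h]

open Real Filter Topology Set

noncomputable def psi : ℝ → ℝ := deriv (fun x => Real.log (Real.Gamma x))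

lemma cast_ne_neg {x : ℝ} (hx : 0 < x) : ∀ m : ℕ, x ≠ -m :=
  fun m => ne_of_gt (by have : (0:ℝ) ≤ m := Nat.cast_nonneg m; linarith)

lemma diff_logGamma {x : ℝ} (hx : 0 < x) :
    DifferentiableAt ℝ (fun y => Real.log (Real.Gamma y)) x :=
  (Real.differentiableAt_Gamma (cast_ne_neg hx)).log
    (Real.Gamma_ne_zero (cast_ne_neg hx))

lemma logGamma_rec {y : ℝ} (hy : 0 < y) :
    Real.log (Real.Gamma (y + 1)) = Real.log (Real.Gamma y) + Real.log y := by
  rw [Real.Gamma_add_one hy.ne', Real.log_mul hy.ne' (Real.Gamma_pos_of_pos hy).ne', add_comm]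

lemma psi_rec {x : ℝ} (hx : 0 < x) : psi (x + 1) = psi x + 1 / x := by
  unfold psi
  rw [← deriv_comp_add_const, one_div, ← Real.deriv_log,
    ← deriv_add (diff_logGamma hx) (Real.differentiableAt_log hx.ne')]
  apply Filter.EventuallyEq.deriv_eq
  filter_upwards [eventually_gt_nhds hx] with y hy
  exact logGamma_rec hy

lemma psi_rec_nat {x : ℝ} (hx : 0 < x) (n : ℕ) :
    psi (x + n) = psi x + ∑ j ∈ Finset.range n, 1 / (x + j) := by
  induction n with
  | zero => simp
  | succ n ih =>
    have h1 : (0:ℝ) < x + n := by have : (0:ℝ) ≤ n := Nat.cast_nonneg n; linarith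
    have : x + (n + 1 : ℕ) = (x + n) + 1 := by push_cast; ring
    rw [this, psi_rec h1, ih, Finset.sum_range_succ]
    ring

lemma psi_convex_bounds {x : ℝ} (hx : 0 < x) :
    Real.log x ≤ psi (x + 1) ∧ psi (x + 1) ≤ Real.log (x + 1) := by
  have hc := Real.convexOn_log_Gamma
  have hmem : ∀ {y : ℝ}, 0 < y → y ∈ Ioi (0:ℝ) := fun h => h
  have hder : DifferentiableAt ℝ (Real.log ∘ Real.Gamma) (x + 1) := diff_logGamma (by linarith)
  have hpsi : psi (x+1) = deriv (Real.log ∘ Real.Gamma) (x+1) := rfl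
  constructor
  · have h := hc.slope_le_deriv (hmem hx) (hmem (by linarith : (0:ℝ) < x + 1))
      (by linarith) hder
    rwa [slope_def_field, show x + 1 - x = (1:ℝ) by ring, div_one,
      show (Real.log ∘ Real.Gamma) (x+1) = Real.log (Real.Gamma (x+1)) from rfl,
      show (Real.log ∘ Real.Gamma) x = Real.log (Real.Gamma x) from rfl,
      logGamma_rec hx, add_sub_cancel_left, ← hpsi] at h
  · have h := hc.deriv_le_slope (hmem (by linarith : (0:ℝ) < x + 1))
      (hmem (by linarith : (0:ℝ) < x + 2)) (by linarith) hder
    rwa [slope_def_field, show x + 2 - (x+1) = (1:ℝ) by ring, div_one,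
      show (Real.log ∘ Real.Gamma) (x+2) = Real.log (Real.Gamma ((x+1)+1)) by simp only [Function.comp_apply]; ring_nf,
      show (Real.log ∘ Real.Gamma) (x+1) = Real.log (Real.Gamma (x+1)) from rfl,
      logGamma_rec (by linarith : (0:ℝ) < x + 1), add_sub_cancel_left, ← hpsi] at h

lemma tendsto_log_shift (c : ℝ) :
    Tendsto (fun n : ℕ => Real.log ((c + n) / n)) atTop (𝓝 0) := by
  have h1 : Tendsto (fun n : ℕ => (c + n) / n) atTop (𝓝 1) := by
    have h0 : Tendsto (fun n : ℕ => c * (n:ℝ)⁻¹ + 1) atTop (𝓝 (c * 0 + 1)) :=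
      (((tendsto_natCast_atTop_atTop (R := ℝ)).inv_tendsto_atTop).const_mul c).add_const 1
    rw [show c * 0 + 1 = (1:ℝ) by ring] at h0
    apply h0.congr'
    filter_upwards [eventually_gt_atTop 0] with n hn
    have : (n:ℝ) ≠ 0 := Nat.cast_ne_zero.mpr hn.ne'
    field_simp
  have h2 := (Real.continuousAt_log one_ne_zero).tendsto.comp h1
  simpa [Function.comp_def] using h2

lemma psi_asymp {x : ℝ} (hx : 0 < x) :
    Tendsto (fun n : ℕ => psi (x + n) - Real.log n) atTop (𝓝 0) := by
  apply tendsto_of_tendsto_of_tendsto_of_le_of_le'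
    (tendsto_log_shift (x - 1)) (tendsto_log_shift x)
  · filter_upwards [eventually_ge_atTop 1] with n hn
    have hn0 : (1:ℝ) ≤ n := by exact_mod_cast hn
    have hy : (0:ℝ) < x + n - 1 := by linarith
    have h := (psi_convex_bounds hy).1
    rw [show x + n - 1 + 1 = x + n by ring] at h
    rw [show x - 1 + n = x + n - 1 by ring, Real.log_div hy.ne' (by linarith : (n:ℝ) ≠ 0)]
    linarith
  · filter_upwards [eventually_ge_atTop 1] with n hn
    have hn0 : (1:ℝ) ≤ n := by exact_mod_cast hn
    have hy : (0:ℝ) < x + n - 1 := by linarith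
    have h := (psi_convex_bounds hy).2
    rw [show x + n - 1 + 1 = x + n by ring] at h
    rw [Real.log_div (by linarith : x + (n:ℝ) ≠ 0) (by linarith : (n:ℝ) ≠ 0)]
    linarith

lemma summable_psi_terms {x : ℝ} (hx : 0 < x) :
    Summable (fun j : ℕ => 1 / ((j:ℝ) + 1) - 1 / (x + j)) := by
  have hbase : Summable (fun j : ℕ => 1 / ((j:ℝ) + 1) ^ 2) := by
    have := (summable_nat_add_iff (f := fun n : ℕ => 1 / (n:ℝ) ^ 2) 1).mpr
      (Real.summable_one_div_nat_pow.mpr one_lt_two)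
    convert this using 2 with j
    · rfl
    push_cast
    ring_nf
  set C := |x - 1| / min x 1 with hC
  have hmin : (0:ℝ) < min x 1 := lt_min hx one_pos
  refine Summable.of_norm_bounded (g := fun j : ℕ => C * (1 / ((j:ℝ) + 1) ^ 2)) (hbase.mul_left C) ?_
  intro j
  have hj0 : (0:ℝ) ≤ j := Nat.cast_nonneg j
  have hxj : (0:ℝ) < x + j := by linarith
  have hj1 : (0:ℝ) < (j:ℝ) + 1 := by linarith
  have heq : 1 / ((j:ℝ) + 1) - 1 / (x + j) = (x - 1) / (((j:ℝ) + 1) * (x + j)) := by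
    field_simp
    ring
  rw [Real.norm_eq_abs, heq, abs_div, abs_of_pos (mul_pos hj1 hxj)]
  have h1 : min x 1 ≤ x := min_le_left x 1
  have h2 : min x 1 ≤ 1 := min_le_right x 1
  have h3 : min x 1 * ((j:ℝ) + 1) ≤ x + j := by
    nlinarith [mul_le_mul_of_nonneg_right h2 hj0]
  have hge : min x 1 * ((j:ℝ) + 1) ^ 2 ≤ ((j:ℝ) + 1) * (x + j) := by
    nlinarith [mul_le_mul_of_nonneg_left h3 hj1.le]
  show |x - 1| / (((j:ℝ) + 1) * (x + j)) ≤ C * (1 / ((j:ℝ) + 1) ^ 2)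
  have hrw : C * (1 / ((j:ℝ) + 1) ^ 2) = |x - 1| / (min x 1 * ((j:ℝ) + 1) ^ 2) := by
    rw [hC]; field_simp
  rw [hrw]
  exact div_le_div_of_nonneg_left (abs_nonneg _) (mul_pos hmin (pow_pos hj1 2)) hge

lemma psi_hasSum {x : ℝ} (hx : 0 < x) :
    HasSum (fun j : ℕ => 1 / ((j:ℝ) + 1) - 1 / (x + j))
      (psi x + Real.eulerMascheroniConstant) := by
  have hsm := summable_psi_terms hx
  have hpartial : ∀ n : ℕ, ∑ j ∈ Finset.range n, (1 / ((j:ℝ) + 1) - 1 / (x + j))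
      = psi x + ((harmonic n : ℝ) - Real.log n) - (psi (x + n) - Real.log n) := by
    intro n
    rw [Finset.sum_sub_distrib, psi_rec_nat hx n]
    have : (harmonic n : ℝ) = ∑ j ∈ Finset.range n, 1 / ((j:ℝ) + 1) := by
      rw [harmonic]; push_cast; simp [one_div]
    rw [this]
    ring
  have hlim : Tendsto (fun n : ℕ => ∑ j ∈ Finset.range n, (1 / ((j:ℝ) + 1) - 1 / (x + j)))
      atTop (𝓝 (psi x + Real.eulerMascheroniConstant)) := by
    simp only [hpartial]
    have := (Real.tendsto_harmonic_sub_log.const_add (psi x)).sub (psi_asymp hx)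
    simpa using this
  have := hsm.hasSum.tendsto_sum_nat
  have heq := tendsto_nhds_unique this hlim
  exact heq ▸ hsm.hasSum

noncomputable def S (k : ℕ) (x : ℝ) : ℝ := ∑' j : ℕ, 1 / (x + j) ^ (k + 1)

lemma summable_inv_sq : Summable (fun j : ℕ => 1 / ((j:ℝ) + 1) ^ 2) := by
  have := (summable_nat_add_iff (f := fun n : ℕ => 1 / (n:ℝ) ^ 2) 1).mpr
    (Real.summable_one_div_nat_pow.mpr one_lt_two)
  convert this using 2 with j
  · rfl
  push_cast
  ring_nf

lemma summable_S {k : ℕ} (hk : 1 ≤ k) {x : ℝ} (hx : 0 < x) :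
    Summable (fun j : ℕ => 1 / (x + j) ^ (k + 1)) := by
  have h : Summable (fun j : ℕ => 1 / (x + j + 1) ^ (k + 1)) := by
    refine Summable.of_nonneg_of_le (fun j => by positivity) (fun j => ?_) summable_inv_sq
    have hj0 : (0:ℝ) ≤ j := Nat.cast_nonneg j
    have hb : ((j:ℝ) + 1) ^ 2 ≤ (x + j + 1) ^ (k + 1) := by
      calc ((j:ℝ)+1) ^ 2 ≤ (x + j + 1) ^ 2 := by nlinarith
        _ ≤ (x + j + 1) ^ (k+1) := by
            apply pow_le_pow_right₀ (by linarith) (by omega)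
    exact one_div_le_one_div_of_le (by positivity) hb
  have h2 : Summable (fun j : ℕ => 1 / (x + ((j + 1 : ℕ):ℝ)) ^ (k + 1)) := by
    convert h using 3 with j
    push_cast; ring
  exact (summable_nat_add_iff 1).mp h2

lemma psi_hasDerivAt {x : ℝ} (hx : 0 < x) : HasDerivAt psi (S 1 x) x := by
  have hx2 : (0:ℝ) < x / 2 := by linarith
  have hu : Summable (fun j : ℕ => 1 / (x/2 + j) ^ 2) := summable_S le_rfl hx2
  have key := hasDerivAt_tsum_of_isPreconnected (u := fun j : ℕ => 1 / (x/2 + j) ^ 2)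
    (g := fun (j : ℕ) (y : ℝ) => 1 / ((j:ℝ) + 1) - 1 / (y + j))
    (g' := fun (j : ℕ) (y : ℝ) => 1 / (y + j) ^ 2)
    (t := Ioi (x/2)) (y₀ := x) (y := x)
    hu isOpen_Ioi (convex_Ioi _).isPreconnected
    ?_ ?_ (by simpa using half_lt_self hx) (summable_psi_terms hx)
    (by simpa using half_lt_self hx)
  · have hev : psi =ᶠ[𝓝 x]
        fun y => (∑' j : ℕ, (1 / ((j:ℝ) + 1) - 1 / (y + j))) - Real.eulerMascheroniConstant := by
      filter_upwards [isOpen_Ioi.mem_nhds (show x ∈ Ioi (0:ℝ) from hx)] with y hy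
      have := (psi_hasSum hy).tsum_eq
      rw [this]; ring
    have h2 := (key.sub_const Real.eulerMascheroniConstant).congr_of_eventuallyEq hev
    simpa [S] using h2
  · intro j y hy
    have hyj : (0:ℝ) < y + j := by
      have : (0:ℝ) ≤ j := Nat.cast_nonneg j
      have : x/2 < y := hy
      linarith
    have h1 : HasDerivAt (fun y : ℝ => y + (j:ℝ)) 1 y := (hasDerivAt_id y).add_const _
    have h2 := (h1.inv hyj.ne').const_sub (1 / ((j:ℝ) + 1))
    simp only [one_div] at h2 ⊢
    convert h2 using 1
    · rfl
    ring
  · intro j y hy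
    have hj0 : (0:ℝ) ≤ j := Nat.cast_nonneg j
    have hyj : (0:ℝ) < y + j := by have : x/2 < y := hy; linarith
    rw [Real.norm_eq_abs, abs_of_pos (by positivity)]
    apply one_div_le_one_div_of_le (by positivity)
    have : x/2 + (j:ℝ) ≤ y + j := by have : x/2 < y := hy; linarith
    nlinarith

lemma S_hasDerivAt (k : ℕ) (hk : 1 ≤ k) {x : ℝ} (hx : 0 < x) :
    HasDerivAt (S k) (-((k:ℝ) + 1) * S (k + 1) x) x := by
  have hx2 : (0:ℝ) < x / 2 := by linarith
  have hu : Summable (fun j : ℕ => ((k:ℝ) + 1) * (1 / (x/2 + j) ^ (k + 2))) :=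
    (summable_S (k := k + 1) (by omega) hx2).mul_left _
  have key := hasDerivAt_tsum_of_isPreconnected
    (u := fun j : ℕ => ((k:ℝ) + 1) * (1 / (x/2 + j) ^ (k + 2)))
    (g := fun (j : ℕ) (y : ℝ) => 1 / (y + j) ^ (k + 1))
    (g' := fun (j : ℕ) (y : ℝ) => -((k:ℝ) + 1) / (y + j) ^ (k + 2))
    (t := Ioi (x/2)) (y₀ := x) (y := x)
    hu isOpen_Ioi (convex_Ioi _).isPreconnected
    ?_ ?_ (by simpa using half_lt_self hx) (summable_S hk hx)
    (by simpa using half_lt_self hx)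
  · have h1 : (∑' j : ℕ, (-((k:ℝ) + 1) / (x + j) ^ (k + 2)))
        = -((k:ℝ) + 1) * S (k + 1) x := by
      rw [S, ← tsum_mul_left]
      congr 1 with j
      rw [mul_one_div]
    rw [h1] at key
    exact key
  · intro j y hy
    have hj0 : (0:ℝ) ≤ j := Nat.cast_nonneg j
    have hyj : (0:ℝ) < y + j := by have : x/2 < y := hy; linarith
    have hne : (y + (j:ℝ)) ^ (k + 1) ≠ 0 := by positivity
    have h1 : HasDerivAt (fun y : ℝ => y + (j:ℝ)) 1 y := (hasDerivAt_id y).add_const _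
    have h2 := (h1.pow (k + 1)).inv hne
    simp only [one_div] at h2 ⊢
    convert h2 using 1
    · rfl
    · rfl
    rw [show k + 1 - 1 = k from rfl]
    simp only [Pi.pow_apply]
    push_cast
    have hne2 : (y + (j:ℝ)) ≠ 0 := hyj.ne'
    field_simp
    ring
  · intro j y hy
    have hj0 : (0:ℝ) ≤ j := Nat.cast_nonneg j
    have hyj : (0:ℝ) < y + j := by have : x/2 < y := hy; linarith
    have hle : x/2 + (j:ℝ) ≤ y + j := by have : x/2 < y := hy; linarith
    rw [Real.norm_eq_abs, abs_div, abs_neg, abs_of_pos (by positivity : (0:ℝ) < (k:ℝ)+1),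
      abs_of_pos (by positivity : (0:ℝ) < (y + (j:ℝ)) ^ (k+2))]
    show ((k:ℝ) + 1) / (y + (j:ℝ)) ^ (k + 2) ≤ ((k:ℝ) + 1) * (1 / (x/2 + (j:ℝ)) ^ (k + 2))
    rw [mul_one_div]
    apply div_le_div_of_nonneg_left (by positivity) (by positivity)
    exact pow_le_pow_left₀ (by positivity) hle _

lemma psi_iteratedDeriv (k : ℕ) (hk : 1 ≤ k) :
    ∀ x : ℝ, 0 < x → iteratedDeriv k psi x = (-1)^(k+1) * (k.factorial : ℝ) * S k x := by
  induction k, hk using Nat.le_induction with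
  | base =>
    intro x hx
    rw [iteratedDeriv_one, (psi_hasDerivAt hx).deriv]
    norm_num
  | succ k hk ih =>
    intro x hx
    rw [iteratedDeriv_succ]
    have hev : iteratedDeriv k psi =ᶠ[𝓝 x]
        fun y => (-1)^(k+1) * (k.factorial : ℝ) * S k y := by
      filter_upwards [isOpen_Ioi.mem_nhds (show x ∈ Ioi (0:ℝ) from hx)] with y hy
      exact ih y hy
    rw [hev.deriv_eq, ((S_hasDerivAt k hk hx).const_mul ((-1:ℝ)^(k+1) * (k.factorial : ℝ))).deriv]
    push_cast [Nat.factorial_succ]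
    ring

lemma tele_hasSum (k : ℕ) (hk : 1 ≤ k) {x : ℝ} (hx : 0 < x) :
    HasSum (fun j : ℕ => 1 / (x + j) ^ k - 1 / (x + j + 1) ^ k) (1 / x ^ k) := by
  have hnn : ∀ j : ℕ, 0 ≤ 1 / (x + j) ^ k - 1 / (x + j + 1) ^ k := by
    intro j
    have hj0 : (0:ℝ) ≤ j := Nat.cast_nonneg j
    have h1 : (0:ℝ) < x + j := by linarith
    have hb : (x + j) ^ k ≤ (x + j + 1) ^ k := pow_le_pow_left₀ h1.le (by linarith) k
    have := one_div_le_one_div_of_le (by positivity) hb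
    linarith
  have hpartial : ∀ n : ℕ, ∑ j ∈ Finset.range n, (1 / (x + j) ^ k - 1 / (x + j + 1) ^ k)
      = 1 / x ^ k - 1 / (x + n) ^ k := by
    intro n
    have h := Finset.sum_range_sub' (f := fun j : ℕ => 1 / (x + j) ^ k) n
    simp only [Nat.cast_zero, add_zero] at h
    rw [← h]
    apply Finset.sum_congr rfl
    intro j _
    push_cast
    ring_nf
  have hsm : Summable (fun j : ℕ => 1 / (x + j) ^ k - 1 / (x + j + 1) ^ k) := by
    apply summable_of_sum_range_le (c := 1 / x ^ k) hnn
    intro n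
    rw [hpartial]
    have : (0:ℝ) ≤ 1 / (x + n) ^ k := by
      have : (0:ℝ) ≤ n := Nat.cast_nonneg n
      positivity
    linarith
  have htend : Tendsto (fun n : ℕ => 1 / (x + n) ^ k) atTop (𝓝 0) := by
    have h1 : Tendsto (fun n : ℕ => x + (n:ℝ)) atTop atTop :=
      tendsto_atTop_add_const_left _ x tendsto_natCast_atTop_atTop
    have h2 := (tendsto_pow_atTop (by omega : k ≠ 0)).comp h1
    simpa [one_div, Function.comp_def, Pi.inv_def] using h2.inv_tendsto_atTop
  have hlim : Tendsto (fun n : ℕ => ∑ j ∈ Finset.range n,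
      (1 / (x + j) ^ k - 1 / (x + j + 1) ^ k)) atTop (𝓝 (1 / x ^ k)) := by
    simp only [hpartial]
    simpa using (tendsto_const_nhds (x := 1 / x ^ k)).sub htend
  have heq := tendsto_nhds_unique hsm.hasSum.tendsto_sum_nat hlim
  exact heq ▸ hsm.hasSum

lemma S_bounds (k : ℕ) (hk : 1 ≤ k) {x : ℝ} (hx : 0 < x) :
    1 / ((k:ℝ) * x ^ k) + 1 / (2 * x ^ (k + 1)) < S k x ∧
      S k x < 1 / ((k:ℝ) * x ^ k) + 1 / x ^ (k + 1) := by
  have hk0 : (0:ℝ) < k := by exact_mod_cast hk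
  have hf : Summable (fun j : ℕ => 1 / (x + j) ^ (k + 1)) := summable_S hk hx
  have htele := tele_hasSum k hk hx
  have hfs : Summable (fun j : ℕ => 1 / (x + j + 1) ^ (k + 1)) := by
    have h := summable_S hk (by linarith : (0:ℝ) < x + 1)
    convert h using 3 with j
    ring
  have hS0 : S k x = 1 / x ^ (k + 1) + ∑' j : ℕ, 1 / (x + j + 1) ^ (k + 1) := by
    rw [S, hf.tsum_eq_zero_add]
    congr 1
    · norm_num
    · apply tsum_congr
      intro j
      push_cast
      ring_nf
  -- termwise inequalities
  have hup : ∀ j : ℕ, (k:ℝ) * (1 / (x + j + 1) ^ (k + 1))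
      < 1 / (x + j) ^ k - 1 / (x + j + 1) ^ k := by
    intro j
    have hj0 : (0:ℝ) ≤ j := Nat.cast_nonneg j
    have := key_upper k hk (x + j) (by linarith)
    rw [mul_one_div]
    convert this using 3 <;> ring
  have hlo : ∀ j : ℕ, 1 / (x + j) ^ k - 1 / (x + j + 1) ^ k
      < ((k:ℝ)/2) * (1 / (x + j) ^ (k + 1) + 1 / (x + j + 1) ^ (k + 1)) := by
    intro j
    have hj0 : (0:ℝ) ≤ j := Nat.cast_nonneg j
    have := key_lower k hk (x + j) (by linarith)
    convert this using 3 <;> ring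
  constructor
  · -- lower bound on S
    have h1 : (1:ℝ) / x ^ k < ∑' j : ℕ,
        ((k:ℝ)/2) * (1 / (x + j) ^ (k + 1) + 1 / (x + j + 1) ^ (k + 1)) := by
      rw [← htele.tsum_eq]
      exact Summable.tsum_lt_tsum (fun j => (hlo j).le) (hlo 0) htele.summable
        (((hf.add hfs)).mul_left _)
    rw [tsum_mul_left, Summable.tsum_add hf hfs] at h1
    have hT : (∑' j : ℕ, 1 / (x + j + 1) ^ (k + 1)) = S k x - 1 / x ^ (k + 1) := by
      rw [hS0]; ring
    rw [hT] at h1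
    have hxk : (0:ℝ) < x ^ k := pow_pos hx k
    have hxk1 : (0:ℝ) < x ^ (k + 1) := pow_pos hx (k + 1)
    have hSsum : S k x = ∑' j : ℕ, 1 / (x + j) ^ (k + 1) := rfl
    rw [← hSsum] at h1
    have h2 := (div_lt_div_iff_of_pos_right hk0).mpr h1
    rw [show ((k:ℝ)/2 * (S k x + (S k x - 1 / x ^ (k + 1))))/k
        = S k x - 1 / (2 * x ^ (k + 1)) by field_simp; ring] at h2
    rw [show (1 / x ^ k) / (k:ℝ) = 1 / ((k:ℝ) * x ^ k) by field_simp] at h2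
    linarith
  · -- upper bound on S
    have h1 : (∑' j : ℕ, (k:ℝ) * (1 / (x + j + 1) ^ (k + 1))) < 1 / x ^ k := by
      rw [← htele.tsum_eq]
      exact Summable.tsum_lt_tsum (fun j => (hup j).le) (hup 0) (hfs.mul_left _) htele.summable
    rw [tsum_mul_left] at h1
    have hT : (∑' j : ℕ, 1 / (x + j + 1) ^ (k + 1)) = S k x - 1 / x ^ (k + 1) := by
      rw [hS0]; ring
    rw [hT] at h1
    have hxk : (0:ℝ) < x ^ k := pow_pos hx k
    have hxk1 : (0:ℝ) < x ^ (k + 1) := pow_pos hx (k + 1)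
    have h2 := (div_lt_div_iff_of_pos_right hk0).mpr h1
    rw [show ((k:ℝ) * (S k x - 1 / x ^ (k + 1)))/k = S k x - 1 / x ^ (k + 1) by
      field_simp] at h2
    rw [show (1 / x ^ k) / (k:ℝ) = 1 / ((k:ℝ) * x ^ k) by field_simp] at h2
    linarith

theorem polygamma_bounds (k : ℕ) (hk : 1 ≤ k) (x : ℝ) (hx : 0 < x) :
    ((k - 1).factorial : ℝ) / x ^ k + (k.factorial : ℝ) / (2 * x ^ (k + 1)) <
      (-1 : ℝ) ^ (k + 1) * iteratedDeriv k psi x ∧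
    (-1 : ℝ) ^ (k + 1) * iteratedDeriv k psi x <
      ((k - 1).factorial : ℝ) / x ^ k + (k.factorial : ℝ) / x ^ (k + 1) := by
  have hk0 : (0:ℝ) < k := by exact_mod_cast hk
  have hfac : (0:ℝ) < (k.factorial : ℝ) := by exact_mod_cast k.factorial_pos
  have hform := psi_iteratedDeriv k hk x hx
  have hsq : (-1 : ℝ) ^ (k + 1) * iteratedDeriv k psi x = (k.factorial : ℝ) * S k x := by
    rw [hform]
    have h1 : ((-1:ℝ)) ^ (k+1) * ((-1:ℝ)) ^ (k+1) = 1 := by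
      rw [← pow_add]; exact Even.neg_one_pow ⟨k+1, by ring⟩
    calc (-1:ℝ)^(k+1) * ((-1:ℝ)^(k+1) * (k.factorial : ℝ) * S k x)
        = ((-1:ℝ)^(k+1) * (-1:ℝ)^(k+1)) * ((k.factorial : ℝ) * S k x) := by ring
      _ = (k.factorial : ℝ) * S k x := by rw [h1]; ring
  have hb := S_bounds k hk hx
  have hkf : (k.factorial : ℝ) = (k:ℝ) * ((k-1).factorial : ℝ) := by
    exact_mod_cast (Nat.mul_factorial_pred (by omega)).symm
  have hxne : x ≠ 0 := hx.ne'
  have hkne : (k:ℝ) ≠ 0 := hk0.ne'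
  constructor
  · have h := mul_lt_mul_of_pos_left hb.1 hfac
    rw [hsq]
    calc ((k - 1).factorial : ℝ) / x ^ k + (k.factorial : ℝ) / (2 * x ^ (k + 1))
        = (k.factorial : ℝ) * (1 / ((k:ℝ) * x ^ k) + 1 / (2 * x ^ (k + 1))) := by
          rw [hkf]; field_simp
      _ < (k.factorial : ℝ) * S k x := h
  · have h := mul_lt_mul_of_pos_left hb.2 hfac
    rw [hsq]
    calc (k.factorial : ℝ) * S k x
        < (k.factorial : ℝ) * (1 / ((k:ℝ) * x ^ k) + 1 / x ^ (k + 1)) := h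
      _ = ((k - 1).factorial : ℝ) / x ^ k + (k.factorial : ℝ) / x ^ (k + 1) := by
          rw [hkf]; field_simp
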